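/- Failure of Monotonicity in uncertain inference: there exists a finite world set W, bivalent assignments v_A, v_B, v_C : W → {0,1}, and a probability mass function c, such that p_c(v_A → v_C) > p_c((v_A ∧' v_B) → v_C), where → is the pointwise Cooper conditional and ∧' pointwise quasi-conjunction. Hence A → C does not entail (A ∧ B) → C in the probability-preserving sense. -/
import Mathlib


/-- The set of trivalent truth values {0, 1/2, 1} inside ℚ. -/
def Tri (x : ℚ) : Prop := x = 0 ∨ x = 1/2 ∨ x = 1

/-- Cooper conditional: f→(0,y)=1/2, f→(1,y)=y, f→(1/2,y)=y (on trivalent values). -/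
def tcond (a b : ℚ) : ℚ := if a = 0 then 1/2 else b

/-- Quasi-conjunction. -/
def tand (a b : ℚ) : ℚ :=
  if a = 0 ∨ b = 0 then 0 else if a = 1 ∨ b = 1 then 1 else 1/2

/-- Quasi-disjunction. -/
def tor (a b : ℚ) : ℚ :=
  if a = 1 ∨ b = 1 then 1 else if a = 0 ∨ b = 0 then 0 else 1/2

/-- Strong Kleene negation. -/
def tneg (a : ℚ) : ℚ := 1 - a

open Finset in
/-- Weight of the worlds where the assignment `v` takes the value `x`. -/
def wt {W : Type*} [Fintype W] (c : W → ℝ) (v : W → ℚ) (x : ℚ) : ℝ :=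
  ∑ w ∈ Finset.univ.filter (fun w => v w = x), c w

/-- Trivalent probability of a truth assignment. -/
noncomputable def pv {W : Type*} [Fintype W] (c : W → ℝ) (v : W → ℚ) : ℝ :=
  if 0 < wt c v 1 + wt c v 0 then wt c v 1 / (wt c v 1 + wt c v 0) else 1

lemma wt_eq {W : Type*} [Fintype W] (c : W → ℝ) (v : W → ℚ) (x : ℚ) :
    wt c v x = ∑ w, if v w = x then c w else 0 := by
  rw [wt, Finset.sum_filter]

/-- Failure of Monotonicity in uncertain inference. -/
theorem monotonicity_fails :
    ∃ (n : ℕ) (c : Fin n → ℝ) (vA vB vC : Fin n → ℚ),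
      (∀ w, 0 ≤ c w) ∧ (∑ w, c w) = 1 ∧
      (∀ w, vA w = 0 ∨ vA w = 1) ∧ (∀ w, vB w = 0 ∨ vB w = 1) ∧
      (∀ w, vC w = 0 ∨ vC w = 1) ∧
      pv c (fun w => tcond (tand (vA w) (vB w)) (vC w)) <
        pv c (fun w => tcond (vA w) (vC w)) := by
  refine ⟨2, fun _ => 1/2, fun _ => 1, ![1,0], ![0,1], ?_, ?_, ?_, ?_, ?_, ?_⟩
  · intro w; norm_num
  · rw [Fin.sum_univ_two]; norm_num
  · intro w; right; rfl
  · intro w; fin_cases w <;> simp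
  · intro w; fin_cases w <;> simp
  · have h1 : (fun w : Fin 2 => tcond (tand 1 (![1,0] w)) (![0,1] w)) = ![0, 1/2] := by
      funext w; fin_cases w <;> norm_num [tcond, tand]
    have h2 : (fun w : Fin 2 => tcond (1:ℚ) (![0,1] w)) = ![0, 1] := by
      funext w; fin_cases w <;> norm_num [tcond]
    rw [h1, h2]
    rw [pv, pv, wt_eq, wt_eq, wt_eq, wt_eq]
    simp only [Fin.sum_univ_two]
    norm_num
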